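/- Let Φ be a real m×n matrix and D an n×n diagonal matrix with positive diagonal entries such that Φ D Φᵀ is invertible, and let d_max denote the largest diagonal entry of D. Then for every w ∈ ℝ^n, ‖(I − D Φᵀ (Φ D Φᵀ)^{-1} Φ) D w‖ ≤ d_max · ‖w‖, where ‖·‖ is the Euclidean norm. -/

import Mathlib

open Matrix

lemma euc_sq' (n : ℕ) (v : Fin n → ℝ) :
    ‖(EuclideanSpace.equiv (Fin n) ℝ).symm v‖ ^ 2 = v ⬝ᵥ v := by
  rw [EuclideanSpace.norm_eq, Real.sq_sqrt (by positivity)]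
  simp [dotProduct, sq]

lemma euc_inner' (n : ℕ) (u v : Fin n → ℝ) :
    @inner ℝ _ _ ((EuclideanSpace.equiv (Fin n) ℝ).symm u)
      ((EuclideanSpace.equiv (Fin n) ℝ).symm v) = u ⬝ᵥ v := by
  simp [PiLp.inner_apply, RCLike.inner_apply, dotProduct]
  exact Finset.sum_congr rfl fun i _ => mul_comm _ _

lemma proj_norm_le' (n : ℕ) (P : Matrix (Fin n) (Fin n) ℝ) (hsym : Pᵀ = P) (hidem : P * P = P)
    (v : Fin n → ℝ) :
    ‖(EuclideanSpace.equiv (Fin n) ℝ).symm (P *ᵥ v)‖ ≤ ‖(EuclideanSpace.equiv (Fin n) ℝ).symm v‖ := by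
  set a := ‖(EuclideanSpace.equiv (Fin n) ℝ).symm (P *ᵥ v)‖ with ha
  set b := ‖(EuclideanSpace.equiv (Fin n) ℝ).symm v‖ with hb
  have hdot : (P *ᵥ v) ⬝ᵥ (P *ᵥ v) = v ⬝ᵥ (P *ᵥ v) := by
    rw [Matrix.dotProduct_mulVec]
    have h2 : (P *ᵥ v) ᵥ* P = P *ᵥ v := by
      calc (P *ᵥ v) ᵥ* P = (P *ᵥ v) ᵥ* Pᵀᵀ := by rw [transpose_transpose]
        _ = Pᵀ *ᵥ (P *ᵥ v) := by rw [Matrix.vecMul_transpose]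
        _ = P *ᵥ v := by rw [hsym, Matrix.mulVec_mulVec, hidem]
    rw [h2, dotProduct_comm]
  have hsq : a ^ 2 ≤ b * a := by
    rw [euc_sq', hdot, ← euc_inner']
    exact real_inner_le_norm _ _
  nlinarith [norm_nonneg ((EuclideanSpace.equiv (Fin n) ℝ).symm (P *ᵥ v)),
    norm_nonneg ((EuclideanSpace.equiv (Fin n) ℝ).symm v)]

lemma diag_norm_le' (n : ℕ) (e : Fin n → ℝ) (c : ℝ) (hc : 0 ≤ c) (h : ∀ i, |e i| ≤ c)
    (v : Fin n → ℝ) :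
    ‖(EuclideanSpace.equiv (Fin n) ℝ).symm (Matrix.diagonal e *ᵥ v)‖ ≤
      c * ‖(EuclideanSpace.equiv (Fin n) ℝ).symm v‖ := by
  rw [EuclideanSpace.norm_eq, EuclideanSpace.norm_eq]
  have : c * Real.sqrt (∑ i, ‖((EuclideanSpace.equiv (Fin n) ℝ).symm v) i‖ ^ 2)
      = Real.sqrt (∑ i, c ^ 2 * ‖((EuclideanSpace.equiv (Fin n) ℝ).symm v) i‖ ^ 2) := by
    rw [← Finset.mul_sum, Real.sqrt_mul (by positivity), Real.sqrt_sq hc]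
  rw [this]
  apply Real.sqrt_le_sqrt
  apply Finset.sum_le_sum
  intro i _
  show ‖(Matrix.diagonal e *ᵥ v) i‖ ^ 2 ≤ c ^ 2 * ‖v i‖ ^ 2
  rw [Matrix.mulVec_diagonal, Real.norm_eq_abs, Real.norm_eq_abs, sq_abs, sq_abs, mul_pow]
  have h1 : e i ^ 2 ≤ c ^ 2 := sq_le_sq' (abs_le.mp (h i)).1 (abs_le.mp (h i)).2
  nlinarith [sq_nonneg (v i)]

/-- Let `Φ` be a real `m × n` matrix and `D` a diagonal matrix with positive diagonal
entries such that `Φ D Φᵀ` is invertible, and let `d_max` be the largest diagonal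
entry of `D`.  Then for every `w ∈ ℝ^n`,
`‖(I − D Φᵀ (Φ D Φᵀ)⁻¹ Φ) D w‖ ≤ d_max ‖w‖` (Euclidean norms). -/
theorem multiplier_update_norm_bound (m n : ℕ)
    (Φ : Matrix (Fin m) (Fin n) ℝ) (d : Fin n → ℝ) (hd : ∀ i, 0 < d i)
    (D : Matrix (Fin n) (Fin n) ℝ) (hD : D = Matrix.diagonal d)
    (hinv : IsUnit (Φ * D * Φᵀ))
    (dmax : ℝ) (hmax : IsGreatest (Set.range d) dmax) :
    ∀ w : Fin n → ℝ,
      ‖(EuclideanSpace.equiv (Fin n) ℝ).symm (((1 - D * Φᵀ * (Φ * D * Φᵀ)⁻¹ * Φ) * D) *ᵥ w)‖ ≤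
        dmax * ‖(EuclideanSpace.equiv (Fin n) ℝ).symm w‖ := by
  intro w
  set B := Φ * D * Φᵀ with hBdef
  have hdet : IsUnit B.det := (Matrix.isUnit_iff_isUnit_det B).mp hinv
  have hBinv : B⁻¹ * B = 1 := Matrix.nonsing_inv_mul B hdet
  set e : Fin n → ℝ := fun i => Real.sqrt (d i) with he
  set S : Matrix (Fin n) (Fin n) ℝ := Matrix.diagonal e with hS
  have hSS : S * S = D := by
    have : (fun i => e i * e i) = d := funext fun i => Real.mul_self_sqrt (hd i).le
    rw [hS, Matrix.diagonal_mul_diagonal, this, hD]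
  have hSt : Sᵀ = S := Matrix.diagonal_transpose e
  have hDt : Dᵀ = D := by rw [hD]; exact Matrix.diagonal_transpose d
  have hBt : Bᵀ = B := by
    rw [hBdef, Matrix.transpose_mul, Matrix.transpose_mul, Matrix.transpose_transpose, hDt,
      Matrix.mul_assoc]
  set A : Matrix (Fin n) (Fin n) ℝ := S * Φᵀ * B⁻¹ * Φ * S with hA
  set P : Matrix (Fin n) (Fin n) ℝ := 1 - A with hP
  have hAt : Aᵀ = A := by
    rw [hA, Matrix.transpose_mul, Matrix.transpose_mul, Matrix.transpose_mul,
      Matrix.transpose_mul, Matrix.transpose_transpose, hSt, Matrix.transpose_nonsing_inv, hBt]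
    simp only [Matrix.mul_assoc]
  have hPt : Pᵀ = P := by rw [hP, Matrix.transpose_sub, Matrix.transpose_one, hAt]
  have hAA : A * A = A := by
    have h1 : A * A = S * Φᵀ * (B⁻¹ * (Φ * (S * S) * Φᵀ) * B⁻¹) * Φ * S := by
      rw [hA]; simp only [Matrix.mul_assoc]
    rw [h1, hSS, ← hBdef, Matrix.mul_assoc B⁻¹ B B⁻¹, ← Matrix.mul_assoc B⁻¹ B B⁻¹, hBinv,
      one_mul, hA]
  have hPP : P * P = P := by
    have : P * P = 1 - A - A + A * A := by rw [hP]; noncomm_ring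
    rw [this, hAA, hP]; noncomm_ring
  have hM : (1 - D * Φᵀ * B⁻¹ * Φ) * D = S * (P * S) := by
    have h1 : S * (P * S) = S * S - S * S * (Φᵀ * (B⁻¹ * (Φ * (S * S)))) := by
      rw [hP, hA, Matrix.sub_mul, Matrix.mul_sub, Matrix.one_mul]
      simp only [Matrix.mul_assoc]
    rw [h1, hSS, Matrix.sub_mul, Matrix.one_mul]
    simp only [Matrix.mul_assoc]
  have hdpos : 0 < dmax := by
    obtain ⟨i, hi⟩ := hmax.1
    exact hi ▸ hd i
  have hsq : 0 ≤ Real.sqrt dmax := Real.sqrt_nonneg dmax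
  have hebd : ∀ i, |e i| ≤ Real.sqrt dmax := by
    intro i
    rw [he, abs_of_nonneg (Real.sqrt_nonneg _)]
    exact Real.sqrt_le_sqrt (hmax.2 ⟨i, rfl⟩)
  have hvec : ((1 - D * Φᵀ * B⁻¹ * Φ) * D) *ᵥ w = S *ᵥ (P *ᵥ (S *ᵥ w)) := by
    rw [Matrix.mulVec_mulVec, Matrix.mulVec_mulVec, hM, Matrix.mul_assoc]
  rw [hvec]
  calc ‖(EuclideanSpace.equiv (Fin n) ℝ).symm (S *ᵥ (P *ᵥ (S *ᵥ w)))‖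
      ≤ Real.sqrt dmax * ‖(EuclideanSpace.equiv (Fin n) ℝ).symm (P *ᵥ (S *ᵥ w))‖ :=
        diag_norm_le' n e _ hsq hebd _
    _ ≤ Real.sqrt dmax * ‖(EuclideanSpace.equiv (Fin n) ℝ).symm (S *ᵥ w)‖ := by
        exact mul_le_mul_of_nonneg_left (proj_norm_le' n P hPt hPP _) hsq
    _ ≤ Real.sqrt dmax * (Real.sqrt dmax * ‖(EuclideanSpace.equiv (Fin n) ℝ).symm w‖) := by
        exact mul_le_mul_of_nonneg_left (diag_norm_le' n e _ hsq hebd _) hsq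
    _ = dmax * ‖(EuclideanSpace.equiv (Fin n) ℝ).symm w‖ := by
        rw [← mul_assoc, Real.mul_self_sqrt hdpos.le]
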